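/- Let k be a positive integer, let s be a real number with s > k, and let N ∈ ℕ. Let (X,d) be a metric space for which there is a constant C₀ ≥ 1 with ℋˢ(B̄(x,ρ)) ≥ C₀⁻¹·ρˢ for every x ∈ X and every 0 < ρ ≤ 1. Let V ⊆ X be a set with ℋˢ(N₁(V)) < ∞, where N₁(V) = {y ∈ X : dist(y,V) < 1}. Let φ: X → ℝᵏ and f: X → ℝᴺ be Lipschitz maps, and suppose that for every x ∈ V there exists a linear map D_x: ℝᵏ → ℝᴺ such that lim_{y→x} ‖f(y) − f(x) − D_x(φ(y) − φ(x))‖ / d(x,y) = 0. Then ℋˢ(f(V)) = 0. -/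

import Mathlib

open Metric MeasureTheory Filter Topology ENNReal


lemma packing_card_le {α : Type*} [MetricSpace α] [MeasurableSpace α] [BorelSpace α]
    (μ : Measure α) (T : Finset α) (a r : ℝ) (hra : 2 * a < r)
    (hsep : (T : Set α).Pairwise fun x y => r ≤ dist x y)
    (W : Set α) (hW : ∀ x ∈ T, closedBall x a ⊆ W)
    (m : ℝ≥0∞) (hm : ∀ x ∈ T, m ≤ μ (closedBall x a)) :
    (T.card : ℝ≥0∞) * m ≤ μ W := by
  have hdisj : (T : Set α).PairwiseDisjoint fun x => closedBall x a := by
    intro x hx y hy hxy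
    refine Set.disjoint_left.2 fun z hz hz' => ?_
    have : dist x y ≤ 2 * a := by
      have := dist_triangle x z y
      rw [mem_closedBall, dist_comm] at hz
      rw [mem_closedBall] at hz'
      nlinarith [dist_comm z y ▸ hz']
    exact absurd (hsep hx hy hxy) (by linarith [this, hra] ; )
  calc (T.card : ℝ≥0∞) * m = ∑ _x ∈ T, m := by simp [mul_comm]
    _ ≤ ∑ x ∈ T, μ (closedBall x a) := Finset.sum_le_sum hm
    _ = μ (⋃ x ∈ T, closedBall x a) :=
        (measure_biUnion_finset hdisj fun x _ => measurableSet_closedBall).symm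
    _ ≤ μ W := measure_mono (Set.iUnion₂_subset hW)

lemma exists_finset_net {α : Type*} [MetricSpace α] (A : Set α) (r : ℝ) (hr : 0 < r) (n : ℕ)
    (H : ∀ T : Finset α, ↑T ⊆ A → ((T : Set α).Pairwise fun x y => r ≤ dist x y) → T.card ≤ n) :
    ∃ T : Finset α, ↑T ⊆ A ∧ ((T : Set α).Pairwise fun x y => r ≤ dist x y) ∧
      ∀ y ∈ A, ∃ x ∈ T, dist x y < r := by
  classical
  set P : ℕ → Prop := fun m => ∃ T : Finset α, ↑T ⊆ A ∧
    ((T : Set α).Pairwise fun x y => r ≤ dist x y) ∧ T.card = m with hP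
  have hP0 : P 0 := ⟨∅, by simp, by simp, by simp⟩
  obtain ⟨T, hTA, hTsep, hTcard⟩ : P (Nat.findGreatest P n) :=
    Nat.findGreatest_spec (Nat.zero_le n) hP0
  refine ⟨T, hTA, hTsep, ?_⟩
  intro y hy
  by_contra hcon
  push_neg at hcon
  have hyT : y ∉ T := fun hyT => absurd (hcon y hyT) (by simp [hr])
  have hsep' : ((insert y T : Finset α) : Set α).Pairwise fun x z => r ≤ dist x z := by
    intro x hx z hz hxz
    simp only [Finset.coe_insert, Set.mem_insert_iff, Finset.mem_coe] at hx hz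
    rcases hx with rfl | hx
    · rcases hz with rfl | hz
      · exact absurd rfl hxz
      · rw [dist_comm]; exact hcon z hz
    · rcases hz with rfl | hz
      · exact hcon x hx
      · exact hTsep hx hz hxz
  have hA' : ↑(insert y T : Finset α) ⊆ A := by
    intro z hz
    simp only [Finset.coe_insert, Set.mem_insert_iff, Finset.mem_coe] at hz
    rcases hz with rfl | hz
    · exact hy
    · exact hTA hz
  have hcard : (insert y T : Finset α).card = Nat.findGreatest P n + 1 := by
    rw [Finset.card_insert_of_notMem hyT, hTcard]
  have hle : Nat.findGreatest P n + 1 ≤ n := by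
    have := H _ hA' hsep'
    rwa [hcard] at this
  exact Nat.findGreatest_is_greatest (Nat.lt_succ_self _) hle ⟨_, hA', hsep', hcard⟩

lemma euclidean_net (k : ℕ) (R r : ℝ) (hr : 0 < r) (hR : 0 ≤ R) :
    ∃ T : Finset (EuclideanSpace ℝ (Fin k)),
      (T.card : ℝ) ≤ (3 * R / r + 3) ^ k ∧
      ∀ w ∈ closedBall (0 : EuclideanSpace ℝ (Fin k)) R, ∃ v ∈ T, dist v w < r := by
  classical
  set E := EuclideanSpace ℝ (Fin k)
  have hv0 : 0 < volume (ball (0 : E) 1) := measure_ball_pos _ _ one_pos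
  have hvt : volume (ball (0 : E) 1) ≠ ⊤ := measure_ball_lt_top.ne
  have claim : ∀ T : Finset E, ↑T ⊆ closedBall (0 : E) R →
      ((T : Set E).Pairwise fun x y => r ≤ dist x y) → (T.card : ℝ) ≤ (3 * R / r + 3) ^ k := by
    intro T hTA hTsep
    have key : (T.card : ℝ≥0∞) * (ENNReal.ofReal ((r / 3) ^ k) * volume (ball (0 : E) 1)) ≤
        ENNReal.ofReal ((R + r / 3) ^ k) * volume (ball (0 : E) 1) := by
      have := packing_card_le (volume : Measure E) T (r / 3) r (by linarith) hTsep
        (closedBall (0 : E) (R + r / 3))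
        (fun x hx => by
          intro z hz
          rw [mem_closedBall] at hz ⊢
          calc dist z 0 ≤ dist z x + dist x 0 := dist_triangle _ _ _
            _ ≤ r / 3 + R := add_le_add hz (hTA hx)
            _ = R + r / 3 := by ring)
        (ENNReal.ofReal ((r / 3) ^ k) * volume (ball (0 : E) 1))
        (fun x hx => by
          rw [Measure.addHaar_closedBall volume x (by linarith : (0:ℝ) ≤ r / 3),
            finrank_euclideanSpace_fin])
      refine this.trans ?_
      rw [Measure.addHaar_closedBall volume 0 (by linarith : (0:ℝ) ≤ R + r / 3),
        finrank_euclideanSpace_fin]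
    rw [← mul_assoc, ENNReal.mul_le_mul_iff_left hv0.ne' hvt] at key
    have hr3 : (0:ℝ) < (r / 3) ^ k := pow_pos (by linarith) _
    have key2 : (T.card : ℝ) * (r / 3) ^ k ≤ (R + r / 3) ^ k := by
      rw [← ENNReal.ofReal_le_ofReal_iff (by positivity : (0:ℝ) ≤ (R + r / 3) ^ k),
        ENNReal.ofReal_mul (by positivity), ENNReal.ofReal_natCast]
      exact key
    have : (T.card : ℝ) ≤ ((R + r / 3) / (r / 3)) ^ k := by
      rw [div_pow, le_div_iff₀ hr3]
      exact key2
    refine this.trans (pow_le_pow_left₀ (by positivity) ?_ _)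
    rw [div_le_iff₀ (by linarith : (0:ℝ) < r / 3)]
    have h3 : (3 * R / r + 3) * (r / 3) = R + r := by field_simp
    rw [h3]
    linarith
  obtain ⟨T, hTA, hTsep, hTnet⟩ := exists_finset_net (closedBall (0 : E) R) r hr
    (Nat.floor ((3 * R / r + 3) ^ k))
    (fun T h1 h2 => Nat.le_floor (claim T h1 h2))
  exact ⟨T, claim T hTA hTsep, hTnet⟩

lemma stepA {X : Type*} [MetricSpace X] [MeasurableSpace X] [BorelSpace X]
    (k : ℕ) (s : ℝ) (hs : 0 < s) (N : ℕ)
    (C₀ : ℝ) (hC₀ : 1 ≤ C₀)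
    (hlow : ∀ (x : X) (ρ : ℝ), 0 < ρ → ρ ≤ 1 →
      ENNReal.ofReal (C₀⁻¹ * ρ ^ s) ≤ μH[s] (closedBall x ρ))
    (V : Set X) (hV : μH[s] (Metric.thickening 1 V) ≠ ⊤)
    (φ : X → EuclideanSpace ℝ (Fin k)) (L : NNReal) (hL : LipschitzWith L φ)
    (f : X → EuclideanSpace ℝ (Fin N))
    (p q : ℕ) (ε : ℝ) (hε : 0 < ε)
    (A : Set X) (hAV : A ⊆ V)
    (hA : ∀ x ∈ A, ∃ D : EuclideanSpace ℝ (Fin k) →L[ℝ] EuclideanSpace ℝ (Fin N),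
      ‖D‖ ≤ p ∧ ∀ y, dist x y ≤ 1 / (q + 1) →
        ‖f y - f x - D (φ y - φ x)‖ ≤ ε * dist x y) :
    μH[s] (f '' A) ≤ μH[s] (Metric.thickening 1 V) *
      ENNReal.ofReal (C₀ * 12 ^ s * ε ^ s * (3 * L * (p + 1) / ε + 3) ^ k) := by
  classical
  set M := μH[s] (Metric.thickening 1 V) with hMdef
  -- total choice of derivatives
  have hA2 : ∀ x : X, ∃ D : EuclideanSpace ℝ (Fin k) →L[ℝ] EuclideanSpace ℝ (Fin N), x ∈ A → (‖D‖ ≤ p ∧ ∀ y, dist x y ≤ 1 / (q + 1) →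
      ‖f y - f x - D (φ y - φ x)‖ ≤ ε * dist x y) := by
    intro x
    by_cases hx : x ∈ A
    · obtain ⟨D, hD1, hD2⟩ := hA x hx
      exact ⟨D, fun _ => ⟨hD1, hD2⟩⟩
    · exact ⟨0, fun h => absurd h hx⟩
  choose D hD using hA2
  -- scales
  set δ : ℕ → ℝ := fun n => min 1 (1 / ((q:ℝ) + 1)) / (n + 1) with hδdef
  have hmin0 : 0 < min 1 (1 / ((q:ℝ) + 1)) := lt_min one_pos (by positivity)
  have hδpos : ∀ n, 0 < δ n := fun n => div_pos hmin0 (by positivity)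
  have hδle : ∀ n, δ n ≤ min 1 (1 / ((q:ℝ) + 1)) := by
    intro n
    apply div_le_self (le_of_lt hmin0)
    have : (0:ℝ) ≤ (n:ℝ) := Nat.cast_nonneg n
    linarith
  have hδle1 : ∀ n, δ n ≤ 1 := fun n => (hδle n).trans (min_le_left _ _)
  have hδleq : ∀ n, δ n ≤ 1 / ((q:ℝ) + 1) := fun n => (hδle n).trans (min_le_right _ _)
  have hδ0 : Tendsto δ atTop (𝓝 0) := by
    have h1 : Tendsto (fun n : ℕ => (1:ℝ) / (n + 1)) atTop (𝓝 0) :=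
      tendsto_one_div_add_atTop_nhds_zero_nat
    have h2 := h1.const_mul (min 1 (1 / ((q:ℝ) + 1)))
    rw [mul_zero] at h2
    refine h2.congr fun n => ?_
    rw [hδdef]
    rw [div_eq_mul_inv, div_eq_mul_inv, one_mul, mul_comm]
    ring
  -- nets at every scale
  have hnets : ∀ n : ℕ, ∃ (T : Finset X) (S : Finset (EuclideanSpace ℝ (Fin k))),
      ↑T ⊆ A ∧
      (∀ y ∈ A, ∃ x ∈ T, dist x y < δ n) ∧
      (T.card : ℝ≥0∞) * ENNReal.ofReal (C₀⁻¹ * (δ n / 3) ^ s) ≤ M ∧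
      ((S.card : ℝ) ≤ (3 * L * (p + 1) / ε + 3) ^ k) ∧
      (∀ w ∈ closedBall (0 : EuclideanSpace ℝ (Fin k)) (L * δ n), ∃ v ∈ S, dist v w < ε * δ n / (p + 1)) := by
    intro n
    have hm0 : (0:ℝ) < C₀⁻¹ * (δ n / 3) ^ s := by
      have := hδpos n
      have hC : (0:ℝ) < C₀⁻¹ := by positivity
      have : (0:ℝ) < (δ n / 3) ^ s := Real.rpow_pos_of_pos (by linarith [hδpos n]) s
      positivity
    set m : ℝ≥0∞ := ENNReal.ofReal (C₀⁻¹ * (δ n / 3) ^ s) with hmdef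
    have hmne0 : m ≠ 0 := by
      simp [hmdef, ENNReal.ofReal_eq_zero, not_le, hm0]
    have hmnetop : m ≠ ⊤ := ENNReal.ofReal_ne_top
    -- packing bound for separated sets in A
    have hpack : ∀ T : Finset X, ↑T ⊆ A →
        ((T : Set X).Pairwise fun x y => δ n ≤ dist x y) → (T.card : ℝ≥0∞) * m ≤ M := by
      intro T hTA hTsep
      refine packing_card_le (μH[s]) T (δ n / 3) (δ n) (by linarith [hδpos n]) hTsep
        (Metric.thickening 1 V) ?_ m ?_
      · intro x hx z hz
        rw [mem_closedBall] at hz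
        rw [Metric.mem_thickening_iff]
        exact ⟨x, hAV (hTA hx), lt_of_le_of_lt hz (by linarith [hδpos n, hδle1 n])⟩
      · intro x _
        exact hlow x (δ n / 3) (by linarith [hδpos n]) (by linarith [hδpos n, hδle1 n])
    have hcardbound : ∀ T : Finset X, ↑T ⊆ A →
        ((T : Set X).Pairwise fun x y => δ n ≤ dist x y) →
          T.card ≤ Nat.floor (M / m).toReal := by
      intro T hTA hTsep
      have h1 : (T.card : ℝ≥0∞) ≤ M / m :=
        (ENNReal.le_div_iff_mul_le (Or.inl hmne0) (Or.inl hmnetop)).2 (hpack T hTA hTsep)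
      have h2 : M / m ≠ ⊤ := (ENNReal.div_lt_top hV hmne0).ne
      have h3 : ((T.card : ℕ) : ℝ) ≤ (M / m).toReal := by
        rw [← ENNReal.toReal_natCast]
        exact ENNReal.toReal_mono h2 h1
      exact Nat.le_floor h3
    obtain ⟨T, hTA, hTsep, hTnet⟩ := exists_finset_net A (δ n) (hδpos n) _ hcardbound
    obtain ⟨S, hScard, hSnet⟩ := euclidean_net k (L * δ n) (ε * δ n / (p + 1))
      (by positivity) (by positivity)
    refine ⟨T, S, hTA, hTnet, hpack T hTA hTsep, ?_, hSnet⟩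
    refine hScard.trans ?_
    have : 3 * ((L:ℝ) * δ n) / (ε * δ n / (p + 1)) = 3 * L * (p + 1) / ε := by
      field_simp
      exact mul_div_cancel_right₀ _ (hδpos n).ne'
    rw [this]
  choose T S hTA hTnet hTcard hScard hSnet using hnets
  -- the covers
  set t : ∀ n : ℕ, ↥(T n ×ˢ S n) → Set (EuclideanSpace ℝ (Fin N)) :=
    fun n i => closedBall (f i.1.1 + D i.1.1 i.1.2) (2 * ε * δ n) with htdef
  have hcover : ∀ n, f '' A ⊆ ⋃ i, t n i := by
    intro n y hy
    obtain ⟨a, ha, rfl⟩ := hy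
    obtain ⟨x, hxT, hxa⟩ := hTnet n a ha
    have hxA : x ∈ A := hTA n hxT
    obtain ⟨hDnorm, hDest⟩ := hD x hxA
    have hdxa : dist x a ≤ δ n := le_of_lt hxa
    have hest : ‖f a - f x - D x (φ a - φ x)‖ ≤ ε * dist x a :=
      hDest a (hdxa.trans (hδleq n))
    have hw : φ a - φ x ∈ closedBall (0 : EuclideanSpace ℝ (Fin k)) (L * δ n) := by
      rw [mem_closedBall, dist_zero_right]
      calc ‖φ a - φ x‖ = dist (φ a) (φ x) := by rw [dist_eq_norm]
        _ ≤ L * dist a x := hL.dist_le_mul a x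
        _ ≤ L * δ n := by
            have := (dist_comm a x) ▸ hdxa
            exact mul_le_mul_of_nonneg_left this (L.coe_nonneg)
    obtain ⟨v, hvS, hvw⟩ := hSnet n _ hw
    refine Set.mem_iUnion.2 ⟨⟨(x, v), Finset.mem_product.2 ⟨hxT, hvS⟩⟩, ?_⟩
    show f a ∈ closedBall (f x + D x v) (2 * ε * δ n)
    rw [mem_closedBall]
    have h1 : ‖D x (φ a - φ x) - D x v‖ ≤ ε * δ n := by
      calc ‖D x (φ a - φ x) - D x v‖ = ‖D x ((φ a - φ x) - v)‖ := by
            rw [map_sub]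
            simp [map_sub]
        _ ≤ ‖D x‖ * ‖(φ a - φ x) - v‖ := (D x).le_opNorm _
        _ ≤ p * (ε * δ n / (p + 1)) := by
            apply mul_le_mul hDnorm ?_ (norm_nonneg _) (by positivity)
            rw [← dist_eq_norm, dist_comm]
            exact le_of_lt hvw
        _ ≤ ε * δ n := by
            rw [div_eq_mul_inv, ← mul_assoc]
            have hp1 : (0:ℝ) < (p:ℝ) + 1 := by positivity
            rw [mul_comm ((p:ℝ)) (ε * δ n), mul_assoc]
            have : (p:ℝ) * ((p:ℝ) + 1)⁻¹ ≤ 1 := by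
              rw [← div_eq_mul_inv, div_le_one hp1]; linarith
            nlinarith [mul_nonneg (le_of_lt hε) (le_of_lt (hδpos n))]
    calc dist (f a) (f x + D x v)
        = ‖(f a - f x - D x (φ a - φ x)) + (D x (φ a - φ x) - D x v)‖ := by
          rw [dist_eq_norm]
          congr 1
          abel
      _ ≤ ‖f a - f x - D x (φ a - φ x)‖ + ‖D x (φ a - φ x) - D x v‖ := norm_add_le _ _
      _ ≤ ε * dist x a + ε * δ n := add_le_add hest h1
      _ ≤ 2 * ε * δ n := by nlinarith [hε, hδpos n]
  have hdiam : ∀ n, ∀ i : ↥(T n ×ˢ S n), EMetric.diam (t n i) ≤ ENNReal.ofReal (4 * ε * δ n) := by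
    intro n i
    have h2 : (0:ℝ) ≤ 2 * ε * δ n := by positivity
    have ht : t n i = closedBall (f i.1.1 + D i.1.1 i.1.2) (2 * ε * δ n) := rfl
    calc EMetric.diam (t n i) ≤ 2 * ENNReal.ofReal (2 * ε * δ n) := by
          rw [ht, ← Metric.emetric_closedBall h2]
          exact EMetric.diam_closedBall
      _ = ENNReal.ofReal (4 * ε * δ n) := by
          rw [← ENNReal.ofReal_ofNat 2, ← ENNReal.ofReal_mul (by norm_num : (0:ℝ) ≤ 2)]
          congr 1
          ring
  have hr0 : Tendsto (fun n => ENNReal.ofReal (4 * ε * δ n)) atTop (𝓝 0) := by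
    rw [← ENNReal.ofReal_zero]
    apply ENNReal.tendsto_ofReal
    have h := hδ0.const_mul (4 * ε)
    rwa [mul_zero] at h
  have hmain := MeasureTheory.Measure.hausdorffMeasure_le_liminf_sum s (f '' A) (fun n => ENNReal.ofReal (4 * ε * δ n))
    hr0 t (Eventually.of_forall hdiam) (Eventually.of_forall hcover)
  refine hmain.trans ?_
  have hbound : ∀ n, (∑ i : ↥(T n ×ˢ S n), EMetric.diam (t n i) ^ s) ≤
      M * ENNReal.ofReal (C₀ * 12 ^ s * ε ^ s * (3 * L * (p + 1) / ε + 3) ^ k) := by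
    intro n
    have hterm : ∀ i : ↥(T n ×ˢ S n), EMetric.diam (t n i) ^ s ≤
        ENNReal.ofReal ((4 * ε * δ n) ^ s) := by
      intro i
      calc EMetric.diam (t n i) ^ s ≤ (ENNReal.ofReal (4 * ε * δ n)) ^ s := by
            apply ENNReal.rpow_le_rpow (hdiam n i) (le_of_lt hs)
        _ = ENNReal.ofReal ((4 * ε * δ n) ^ s) := by
            rw [← ENNReal.ofReal_rpow_of_pos (by positivity)]
    calc (∑ i : ↥(T n ×ˢ S n), EMetric.diam (t n i) ^ s)
        ≤ ∑ _i : ↥(T n ×ˢ S n), ENNReal.ofReal ((4 * ε * δ n) ^ s) :=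
          Finset.sum_le_sum fun i _ => hterm i
      _ = ((T n).card * (S n).card : ℕ) * ENNReal.ofReal ((4 * ε * δ n) ^ s) := by
          rw [Finset.sum_const, Finset.card_univ, Fintype.card_coe, Finset.card_product,
            nsmul_eq_mul]
      _ ≤ M * ENNReal.ofReal (C₀ * 12 ^ s * ε ^ s * (3 * L * (p + 1) / ε + 3) ^ k) := by
          push_cast
          have hkey : ENNReal.ofReal ((4 * ε * δ n) ^ s) =
              ENNReal.ofReal (C₀⁻¹ * (δ n / 3) ^ s) * ENNReal.ofReal (C₀ * 12 ^ s * ε ^ s) := by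
            rw [← ENNReal.ofReal_mul (by positivity)]
            congr 1
            have hC0 : (0:ℝ) < C₀ := by linarith
            have h1 : (4 * ε * δ n) ^ s = (δ n / 3) ^ s * 12 ^ s * ε ^ s := by
              rw [← Real.mul_rpow (by positivity) (by norm_num),
                ← Real.mul_rpow (by positivity) (le_of_lt hε)]
              congr 1
              ring
            rw [h1]
            field_simp
          rw [hkey, ← mul_assoc]
          have hre : ((T n).card : ℝ≥0∞) * ((S n).card : ℝ≥0∞) *
              (ENNReal.ofReal (C₀⁻¹ * (δ n / 3) ^ s) * ENNReal.ofReal (C₀ * 12 ^ s * ε ^ s)) =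
              (((T n).card : ℝ≥0∞) * ENNReal.ofReal (C₀⁻¹ * (δ n / 3) ^ s)) *
              (((S n).card : ℝ≥0∞) * ENNReal.ofReal (C₀ * 12 ^ s * ε ^ s)) := by ring
          rw [mul_assoc, hre]
          refine mul_le_mul' (hTcard n) ?_
          have hS : ((S n).card : ℝ≥0∞) ≤ ENNReal.ofReal ((3 * L * (p + 1) / ε + 3) ^ k) := by
            rw [← ENNReal.ofReal_natCast]
            exact ENNReal.ofReal_le_ofReal (hScard n)
          calc ((S n).card : ℝ≥0∞) * ENNReal.ofReal (C₀ * 12 ^ s * ε ^ s)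
              ≤ ENNReal.ofReal ((3 * L * (p + 1) / ε + 3) ^ k) *
                ENNReal.ofReal (C₀ * 12 ^ s * ε ^ s) := mul_le_mul_left hS _
            _ = ENNReal.ofReal (C₀ * 12 ^ s * ε ^ s * (3 * L * (p + 1) / ε + 3) ^ k) := by
                rw [← ENNReal.ofReal_mul (by positivity)]
                congr 1
                ring
  calc liminf (fun n => ∑ i : ↥(T n ×ˢ S n), EMetric.diam (t n i) ^ s) atTop
      ≤ liminf (fun _n : ℕ => M * ENNReal.ofReal (C₀ * 12 ^ s * ε ^ s *
          (3 * L * (p + 1) / ε + 3) ^ k)) atTop :=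
        liminf_le_liminf (Eventually.of_forall hbound)
    _ = M * ENNReal.ofReal (C₀ * 12 ^ s * ε ^ s * (3 * L * (p + 1) / ε + 3) ^ k) :=
        liminf_const _

/-- If a space satisfies the lower mass bound `ℋˢ(B̄(x,ρ)) ≥ C₀⁻¹ ρˢ`, and `f`
is a Lipschitz map that is differentiable, through a Lipschitz map `φ` into `ℝᵏ`
with `k < s`, at every point of a set `V` with `ℋˢ(N₁(V)) < ∞`, then
`ℋˢ(f(V)) = 0`. -/
theorem image_null_of_differentiable_through_low_dimension
    {X : Type*} [MetricSpace X] [MeasurableSpace X] [BorelSpace X]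
    (k : ℕ) (hk : 1 ≤ k) (s : ℝ) (hs : (k : ℝ) < s) (N : ℕ)
    (C₀ : ℝ) (hC₀ : 1 ≤ C₀)
    (hlow : ∀ (x : X) (ρ : ℝ), 0 < ρ → ρ ≤ 1 →
      ENNReal.ofReal (C₀⁻¹ * ρ ^ s) ≤ μH[s] (closedBall x ρ))
    (V : Set X) (hV : μH[s] (Metric.thickening 1 V) < ⊤)
    (φ : X → EuclideanSpace ℝ (Fin k)) (hφ : ∃ K : NNReal, LipschitzWith K φ)
    (f : X → EuclideanSpace ℝ (Fin N)) (hf : ∃ K : NNReal, LipschitzWith K f)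
    (hdiff : ∀ x ∈ V,
      ∃ D : EuclideanSpace ℝ (Fin k) →ₗ[ℝ] EuclideanSpace ℝ (Fin N),
        Tendsto (fun y : X => ‖f y - f x - D (φ y - φ x)‖ / dist x y)
          (𝓝[≠] x) (𝓝 0)) :
    μH[s] (f '' V) = 0 := by
  classical
  obtain ⟨L, hL⟩ := hφ
  have hs0 : 0 < s := lt_of_le_of_lt (Nat.cast_nonneg k) hs
  set M := μH[s] (Metric.thickening 1 V) with hMdef
  set W' : ℕ → Set X := fun p =>
    {x | x ∈ V ∧ ∃ D : EuclideanSpace ℝ (Fin k) →L[ℝ] EuclideanSpace ℝ (Fin N),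
      ‖D‖ ≤ p ∧ Tendsto (fun y : X => ‖f y - f x - D (φ y - φ x)‖ / dist x y)
        (𝓝[≠] x) (𝓝 0)} with hW'def
  have hVW : V ⊆ ⋃ p, W' p := by
    intro x hx
    obtain ⟨D, hD⟩ := hdiff x hx
    refine Set.mem_iUnion.2 ⟨Nat.ceil ‖LinearMap.toContinuousLinearMap D‖,
      hx, LinearMap.toContinuousLinearMap D, Nat.le_ceil _, ?_⟩
    have hcoe : ∀ v, (LinearMap.toContinuousLinearMap D) v = D v := fun v => rfl
    simpa only [hcoe] using hD
  have key : ∀ p, μH[s] (f '' W' p) = 0 := by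
    intro p
    have main : ∀ m : ℕ, μH[s] (f '' W' p) ≤ M *
        ENNReal.ofReal (C₀ * 12 ^ s * (1 / ((m:ℝ) + 1)) ^ s *
          (3 * L * ((p:ℝ) + 1) / (1 / ((m:ℝ) + 1)) + 3) ^ k) := by
      intro m
      set ε : ℝ := 1 / ((m:ℝ) + 1) with hεdef
      have hε : 0 < ε := by positivity
      set Wq : ℕ → Set X := fun q =>
        {x | x ∈ V ∧ ∃ D : EuclideanSpace ℝ (Fin k) →L[ℝ] EuclideanSpace ℝ (Fin N),
          ‖D‖ ≤ p ∧ ∀ y, dist x y ≤ 1 / ((q:ℝ) + 1) →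
            ‖f y - f x - D (φ y - φ x)‖ ≤ ε * dist x y} with hWqdef
      have hsub : W' p ⊆ ⋃ q, Wq q := by
        rintro x ⟨hxV, D, hDp, hDt⟩
        have hev : (fun y : X => ‖f y - f x - D (φ y - φ x)‖ / dist x y) ⁻¹' Set.Iio ε ∈
            𝓝[≠] x := hDt (gt_mem_nhds hε)
        rw [Metric.mem_nhdsWithin_iff] at hev
        obtain ⟨r, hr0, hr⟩ := hev
        obtain ⟨q, hq⟩ := exists_nat_one_div_lt hr0
        refine Set.mem_iUnion.2 ⟨q, hxV, D, hDp, ?_⟩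
        intro y hy
        by_cases hyx : y = x
        · subst hyx
          simp
        · have hyb : y ∈ ball x r ∩ {x}ᶜ := by
            constructor
            · rw [mem_ball, dist_comm]
              exact lt_of_le_of_lt hy hq
            · exact hyx
          have hlt : ‖f y - f x - D (φ y - φ x)‖ / dist x y < ε := hr hyb
          have hd0 : 0 < dist x y := dist_pos.2 (fun h => hyx h.symm)
          rw [div_lt_iff₀ hd0] at hlt
          linarith
      have hmono : Monotone Wq := by
        intro q q' hqq' x hx
        obtain ⟨hxV, D, hDp, hDest⟩ := hx
        refine ⟨hxV, D, hDp, fun y hy => hDest y (hy.trans ?_)⟩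
        apply one_div_le_one_div_of_le (by positivity)
        have : (q:ℝ) ≤ (q':ℝ) := Nat.cast_le.2 hqq'
        linarith
      calc μH[s] (f '' W' p) ≤ μH[s] (⋃ q, f '' Wq q) := by
            apply measure_mono
            rw [← Set.image_iUnion]
            exact Set.image_mono hsub
        _ = ⨆ q, μH[s] (f '' Wq q) :=
            Monotone.measure_iUnion (fun q q' h => Set.image_mono (hmono h))
        _ ≤ M * ENNReal.ofReal (C₀ * 12 ^ s * ε ^ s * (3 * L * ((p:ℝ) + 1) / ε + 3) ^ k) := by
            refine iSup_le fun q => ?_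
            exact stepA k s hs0 N C₀ hC₀ hlow V hV.ne φ L hL f p q ε hε (Wq q)
              (fun x hx => hx.1) (fun x hx => hx.2)
    -- let m → ∞
    set c : ℝ := 3 * L * ((p:ℝ) + 1) with hcdef
    have hc0 : 0 ≤ c := by positivity
    have hbound : ∀ m : ℕ, μH[s] (f '' W' p) ≤ M *
        ENNReal.ofReal (C₀ * 12 ^ s * (c + 3) ^ k * (1 / ((m:ℝ) + 1)) ^ (s - k)) := by
      intro m
      refine (main m).trans ?_
      apply mul_le_mul_right
      apply ENNReal.ofReal_le_ofReal
      set ε : ℝ := 1 / ((m:ℝ) + 1) with hεdef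
      have hε : 0 < ε := by positivity
      have hε1 : ε ≤ 1 := by
        rw [hεdef]
        rw [div_le_one (by positivity)]
        have : (0:ℝ) ≤ (m:ℝ) := Nat.cast_nonneg m
        linarith
      have h1 : c / ε + 3 ≤ (c + 3) / ε := by
        rw [div_add' _ _ _ hε.ne', div_le_div_iff₀ hε hε]
        have h3 : 3 * ε ≤ 3 := by linarith
        nlinarith
      have h2 : (c / ε + 3) ^ k ≤ (c + 3) ^ k / ε ^ k := by
        rw [← div_pow]
        exact pow_le_pow_left₀ (by positivity) h1 k
      have h3 : ε ^ s * ((c + 3) ^ k / ε ^ k) = (c + 3) ^ k * ε ^ (s - (k:ℝ)) := by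
        rw [Real.rpow_sub hε, ← Real.rpow_natCast ε k]
        ring
      calc C₀ * 12 ^ s * ε ^ s * (c / ε + 3) ^ k
          ≤ C₀ * 12 ^ s * ε ^ s * ((c + 3) ^ k / ε ^ k) := by
            apply mul_le_mul_of_nonneg_left h2
            have h12 : (0:ℝ) < (12:ℝ) ^ s := Real.rpow_pos_of_pos (by norm_num) s
            have hεs : (0:ℝ) < ε ^ s := Real.rpow_pos_of_pos hε s
            positivity
        _ = C₀ * 12 ^ s * (c + 3) ^ k * ε ^ (s - (k:ℝ)) := by
            rw [mul_assoc (C₀ * 12 ^ s), h3]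
            ring
    have htend : Tendsto (fun m : ℕ => M *
        ENNReal.ofReal (C₀ * 12 ^ s * (c + 3) ^ k * (1 / ((m:ℝ) + 1)) ^ (s - k)))
        atTop (𝓝 0) := by
      have h1 : Tendsto (fun m : ℕ => (1:ℝ) / ((m:ℝ) + 1)) atTop (𝓝 0) :=
        tendsto_one_div_add_atTop_nhds_zero_nat
      have h2 : Tendsto (fun m : ℕ => ((1:ℝ) / ((m:ℝ) + 1)) ^ (s - (k:ℝ))) atTop (𝓝 0) := by
        have hcont : ContinuousAt (fun x : ℝ => x ^ (s - (k:ℝ))) 0 :=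
          Real.continuousAt_rpow_const 0 (s - k) (Or.inr (by linarith))
        have := hcont.tendsto.comp h1
        rwa [Real.zero_rpow (by linarith : s - (k:ℝ) ≠ 0)] at this
      have h3 : Tendsto (fun m : ℕ => C₀ * 12 ^ s * (c + 3) ^ k *
          ((1:ℝ) / ((m:ℝ) + 1)) ^ (s - (k:ℝ))) atTop (𝓝 0) := by
        have := h2.const_mul (C₀ * 12 ^ s * (c + 3) ^ k)
        rwa [mul_zero] at this
      have h4 : Tendsto (fun m : ℕ => ENNReal.ofReal (C₀ * 12 ^ s * (c + 3) ^ k *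
          ((1:ℝ) / ((m:ℝ) + 1)) ^ (s - (k:ℝ)))) atTop (𝓝 0) := by
        rw [← ENNReal.ofReal_zero]
        exact ENNReal.tendsto_ofReal h3
      have h5 := ENNReal.Tendsto.const_mul h4 (Or.inr hV.ne)
      rwa [mul_zero] at h5
    have hle0 : μH[s] (f '' W' p) ≤ 0 := ge_of_tendsto' htend hbound
    exact le_antisymm hle0 zero_le
  refine le_antisymm ?_ zero_le
  calc μH[s] (f '' V) ≤ μH[s] (⋃ p, f '' W' p) := by
        apply measure_mono
        rw [← Set.image_iUnion]
        exact Set.image_mono hVW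
    _ ≤ ∑' p, μH[s] (f '' W' p) := measure_iUnion_le _
    _ = 0 := by simp [key]
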